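/- Let V_t be the value-iteration iterates (V_0 ≡ 0, V_{t+1}(S) = c(S) + min{(K_0 V_t)(S), (K_1 V_t)(S)}). Then for every t ≥ 0, every battery level e ∈ {1,...,E_max}, every source state X ∈ {0,1}, and all VIA values Δ⁻, Δ⁺ with 1 ≤ Δ⁻ ≤ Δ⁺ ≤ Δ_max, the inequality p_f·[V_t(e−1, X, Δ⁺) − V_t(e−1, X, Δ⁻)] ≤ V_t(e, X, Δ⁺) − V_t(e, X, Δ⁻) holds (the key induction inequality, eq. (13), in the proof of Theorem 1). -/

import Mathlib

open Finset

namespace VIA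

/-- The MDP state space: battery level, source state, VIA value. -/
abbrev State (Emax Dmax : ℕ) := Fin (Emax + 1) × Bool × Fin (Dmax + 1)

/-- Deterministic next state given the action `a`, energy arrival `b`,
source-flip indicator `f`, and channel-success indicator `h`. -/
def nextState (Emax Dmax : ℕ) (s : State Emax Dmax) (a b f h : Bool) :
    State Emax Dmax :=
  let act : Bool := a && decide (0 < s.1.val)
  -- a successful transmission requires transmitting and channel success
  let succ : Bool := act && h
  (⟨min (s.1.val + (if b then 1 else 0) - (if act then 1 else 0)) Emax,
      Nat.lt_succ_of_le (min_le_right _ _)⟩,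
   (if f then !s.2.1 else s.2.1),
   ⟨min (if succ then (if f then 1 else 0)
         else (if f then s.2.2.val + 1 else s.2.2.val)) Dmax,
      Nat.lt_succ_of_le (min_le_right _ _)⟩)

/-- Bernoulli weight: probability `x` for `true`, `1 - x` for `false`. -/
def bern (x : ℝ) : Bool → ℝ := fun b => if b then x else 1 - x

/-- The transition kernel `K_a(s, s')` of the MDP, for action `a`
(`a = true` means transmit).  The source flips with probability `p`
from state `0 = false` and with probability `q` from state `1 = true`;
energy arrives with probability `β`; a transmission succeeds with
probability `ps`. -/
def K (Emax Dmax : ℕ) (p q β ps : ℝ) (a : Bool) (s s' : State Emax Dmax) : ℝ :=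
  ∑ b : Bool, ∑ f : Bool, ∑ h : Bool,
    bern β b * bern (if s.2.1 then q else p) f * bern ps h *
      (if nextState Emax Dmax s a b f h = s' then 1 else 0)

/-- The per-stage cost: the VIA value. -/
def cost (Emax Dmax : ℕ) (s : State Emax Dmax) : ℝ := s.2.2.val

/-- `(K_a V)(s) = ∑_{s'} K_a(s,s') V(s')`. -/
def KV (Emax Dmax : ℕ) (p q β ps : ℝ) (a : Bool) (V : State Emax Dmax → ℝ)
    (s : State Emax Dmax) : ℝ :=
  ∑ s' : State Emax Dmax, K Emax Dmax p q β ps a s s' * V s'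

/-- Value iteration: `V_0 ≡ 0`,
`V_{t+1}(s) = c(s) + min{(K_0 V_t)(s), (K_1 V_t)(s)}`. -/
def Viter (Emax Dmax : ℕ) (p q β ps : ℝ) : ℕ → State Emax Dmax → ℝ
  | 0 => fun _ => 0
  | t + 1 => fun s =>
      cost Emax Dmax s +
        min (KV Emax Dmax p q β ps false (Viter Emax Dmax p q β ps t) s)
            (KV Emax Dmax p q β ps true (Viter Emax Dmax p q β ps t) s)

/-- `ΔV_t(s) = (K_1 V_t)(s) − (K_0 V_t)(s)`. -/
def dV (Emax Dmax : ℕ) (p q β ps : ℝ) (t : ℕ) (s : State Emax Dmax) : ℝ :=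
  KV Emax Dmax p q β ps true (Viter Emax Dmax p q β ps t) s -
    KV Emax Dmax p q β ps false (Viter Emax Dmax p q β ps t) s


section Aux
variable {Emax Dmax : ℕ} {p q β ps : ℝ}

lemma bern_nonneg {x : ℝ} (h0 : 0 ≤ x) (h1 : x ≤ 1) (b : Bool) : 0 ≤ bern x b := by
  cases b <;> simp [bern] <;> linarith

lemma KV_apply (a : Bool) (V : State Emax Dmax → ℝ) (s : State Emax Dmax) :
    KV Emax Dmax p q β ps a V s =
      ∑ b : Bool, ∑ f : Bool, ∑ h : Bool,
        bern β b * bern (if s.2.1 then q else p) f * bern ps h *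
          V (nextState Emax Dmax s a b f h) := by
  unfold KV K
  simp only [Finset.sum_mul]
  rw [Finset.sum_comm]
  refine Finset.sum_congr rfl fun b _ => ?_
  rw [Finset.sum_comm]
  refine Finset.sum_congr rfl fun f _ => ?_
  rw [Finset.sum_comm]
  refine Finset.sum_congr rfl fun h _ => ?_
  simp [mul_ite, ite_mul, Finset.sum_ite_eq]

lemma mono (hp0 : 0 ≤ p) (hp1 : p ≤ 1) (hq0 : 0 ≤ q) (hq1 : q ≤ 1)
    (hβ0 : 0 ≤ β) (hβ1 : β ≤ 1) (hps0 : 0 ≤ ps) (hps1 : ps ≤ 1) :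
    ∀ t e (he : e < Emax + 1) (X : Bool) d1 d2, d1 ≤ d2 →
      ∀ (hd1 : d1 < Dmax + 1) (hd2 : d2 < Dmax + 1),
      Viter Emax Dmax p q β ps t (⟨e, he⟩, X, ⟨d1, hd1⟩) ≤
        Viter Emax Dmax p q β ps t (⟨e, he⟩, X, ⟨d2, hd2⟩) := by
  intro t
  induction t with
  | zero => intros; simp [Viter]
  | succ t IH =>
    intro e he X d1 d2 h12 hd1 hd2
    simp only [Viter, cost]
    have hflip0 : 0 ≤ (if X then q else p) := by cases X <;> simp [hp0, hq0]
    have hflip1 : (if X then q else p) ≤ 1 := by cases X <;> simp [hp1, hq1]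
    have hKV : ∀ a : Bool,
        KV Emax Dmax p q β ps a (Viter Emax Dmax p q β ps t) (⟨e, he⟩, X, ⟨d1, hd1⟩) ≤
        KV Emax Dmax p q β ps a (Viter Emax Dmax p q β ps t) (⟨e, he⟩, X, ⟨d2, hd2⟩) := by
      intro a
      rw [KV_apply, KV_apply]
      dsimp only
      refine Finset.sum_le_sum fun b _ => Finset.sum_le_sum fun f _ =>
        Finset.sum_le_sum fun h _ => ?_
      refine mul_le_mul_of_nonneg_left ?_
        (mul_nonneg (mul_nonneg (bern_nonneg hβ0 hβ1 b) (bern_nonneg hflip0 hflip1 f))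
          (bern_nonneg hps0 hps1 h))
      simp only [nextState]
      refine IH _ _ _ _ _ ?_ _ _
      refine min_le_min ?_ le_rfl
      split_ifs <;> omega
    have h2 : ((d1 : ℕ) : ℝ) ≤ (d2 : ℝ) := by exact_mod_cast h12
    exact add_le_add h2 (min_le_min (hKV false) (hKV true))
lemma key_aux (hp0 : 0 ≤ p) (hp1 : p ≤ 1) (hq0 : 0 ≤ q) (hq1 : q ≤ 1)
    (hβ0 : 0 ≤ β) (hβ1 : β ≤ 1) (hps0 : 0 ≤ ps) (hps1 : ps ≤ 1) :
    ∀ t : ℕ, ∀ e, 1 ≤ e → ∀ (X : Bool) (d1 d2 : ℕ), 1 ≤ d1 → d1 ≤ d2 →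
      ∀ (he' : e - 1 < Emax + 1) (he : e < Emax + 1)
        (hd1 : d1 < Dmax + 1) (hd2 : d2 < Dmax + 1),
      (1 - ps) *
          (Viter Emax Dmax p q β ps t (⟨e - 1, he'⟩, X, ⟨d2, hd2⟩) -
            Viter Emax Dmax p q β ps t (⟨e - 1, he'⟩, X, ⟨d1, hd1⟩)) ≤
        Viter Emax Dmax p q β ps t (⟨e, he⟩, X, ⟨d2, hd2⟩) -
          Viter Emax Dmax p q β ps t (⟨e, he⟩, X, ⟨d1, hd1⟩) := by
  intro t
  induction t with
  | zero => intros; simp [Viter]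
  | succ t IH =>
    have pfnn : (0:ℝ) ≤ 1 - ps := by linarith
    -- step version of IH allowing equal or adjacent battery levels
    have IH' : ∀ e1 e2, (e2 = e1 ∨ e2 = e1 + 1) → ∀ (X : Bool) (d1 d2 : ℕ),
        1 ≤ d1 → d1 ≤ d2 →
        ∀ (h1 : e1 < Emax + 1) (h2 : e2 < Emax + 1)
          (hd1 : d1 < Dmax + 1) (hd2 : d2 < Dmax + 1),
        (1 - ps) *
            (Viter Emax Dmax p q β ps t (⟨e1, h1⟩, X, ⟨d2, hd2⟩) -
              Viter Emax Dmax p q β ps t (⟨e1, h1⟩, X, ⟨d1, hd1⟩)) ≤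
          Viter Emax Dmax p q β ps t (⟨e2, h2⟩, X, ⟨d2, hd2⟩) -
            Viter Emax Dmax p q β ps t (⟨e2, h2⟩, X, ⟨d1, hd1⟩) := by
      rintro e1 e2 (rfl | rfl) X d1 d2 hd1p h12 h1 h2 hd1 hd2
      · have hm := mono hp0 hp1 hq0 hq1 hβ0 hβ1 hps0 hps1 t e2 h1 X d1 d2 h12 hd1 hd2
        have goal' : (1 - ps) *
            (Viter Emax Dmax p q β ps t (⟨e2, h1⟩, X, ⟨d2, hd2⟩) -
              Viter Emax Dmax p q β ps t (⟨e2, h1⟩, X, ⟨d1, hd1⟩)) ≤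
          Viter Emax Dmax p q β ps t (⟨e2, h1⟩, X, ⟨d2, hd2⟩) -
            Viter Emax Dmax p q β ps t (⟨e2, h1⟩, X, ⟨d1, hd1⟩) := by nlinarith
        exact goal'
      · exact IH (e1 + 1) (by omega) X d1 d2 hd1p h12 h1 h2 hd1 hd2
    -- key inequality for the no-transmit kernel
    have F0 : ∀ e, 1 ≤ e → ∀ (X : Bool) (d1 d2 : ℕ), 1 ≤ d1 → d1 ≤ d2 →
        ∀ (he' : e - 1 < Emax + 1) (he : e < Emax + 1)
          (hd1 : d1 < Dmax + 1) (hd2 : d2 < Dmax + 1),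
        (1 - ps) *
            (KV Emax Dmax p q β ps false (Viter Emax Dmax p q β ps t) (⟨e - 1, he'⟩, X, ⟨d2, hd2⟩) -
              KV Emax Dmax p q β ps false (Viter Emax Dmax p q β ps t) (⟨e - 1, he'⟩, X, ⟨d1, hd1⟩)) ≤
          KV Emax Dmax p q β ps false (Viter Emax Dmax p q β ps t) (⟨e, he⟩, X, ⟨d2, hd2⟩) -
            KV Emax Dmax p q β ps false (Viter Emax Dmax p q β ps t) (⟨e, he⟩, X, ⟨d1, hd1⟩) := by
      intro e he1 X d1 d2 hd1p h12 he' he hd1 hd2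
      rw [KV_apply, KV_apply, KV_apply, KV_apply]
      dsimp only
      simp only [← Finset.sum_sub_distrib, Finset.mul_sum]
      refine Finset.sum_le_sum fun b _ => Finset.sum_le_sum fun f _ =>
        Finset.sum_le_sum fun h _ => ?_
      have hflip0 : 0 ≤ (if X then q else p) := by cases X <;> simp [hp0, hq0]
      have hflip1 : (if X then q else p) ≤ 1 := by cases X <;> simp [hp1, hq1]
      have hw : 0 ≤ bern β b * bern (if X then q else p) f * bern ps h :=
        mul_nonneg (mul_nonneg (bern_nonneg hβ0 hβ1 b) (bern_nonneg hflip0 hflip1 f))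
          (bern_nonneg hps0 hps1 h)
      have hterm : (1 - ps) *
          (Viter Emax Dmax p q β ps t
              (nextState Emax Dmax (⟨e - 1, he'⟩, X, ⟨d2, hd2⟩) false b f h) -
            Viter Emax Dmax p q β ps t
              (nextState Emax Dmax (⟨e - 1, he'⟩, X, ⟨d1, hd1⟩) false b f h)) ≤
          Viter Emax Dmax p q β ps t
              (nextState Emax Dmax (⟨e, he⟩, X, ⟨d2, hd2⟩) false b f h) -
            Viter Emax Dmax p q β ps t
              (nextState Emax Dmax (⟨e, he⟩, X, ⟨d1, hd1⟩) false b f h) := by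
        cases b <;> cases f <;>
          · simp only [nextState]
            simp only [Bool.false_and, Bool.and_false, if_false, if_true,
              Bool.false_eq_true, Nat.add_zero, Nat.sub_zero]
            refine IH' _ _ ?_ _ _ _ ?_ ?_ _ _ _ _ <;> omega
      calc (1 - ps) *
            (bern β b * bern (if X then q else p) f * bern ps h *
                Viter Emax Dmax p q β ps t
                  (nextState Emax Dmax (⟨e - 1, he'⟩, X, ⟨d2, hd2⟩) false b f h) -
              bern β b * bern (if X then q else p) f * bern ps h *
                Viter Emax Dmax p q β ps t
                  (nextState Emax Dmax (⟨e - 1, he'⟩, X, ⟨d1, hd1⟩) false b f h))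
          = bern β b * bern (if X then q else p) f * bern ps h *
              ((1 - ps) *
                (Viter Emax Dmax p q β ps t
                    (nextState Emax Dmax (⟨e - 1, he'⟩, X, ⟨d2, hd2⟩) false b f h) -
                  Viter Emax Dmax p q β ps t
                    (nextState Emax Dmax (⟨e - 1, he'⟩, X, ⟨d1, hd1⟩) false b f h))) := by
            ring
        _ ≤ bern β b * bern (if X then q else p) f * bern ps h *
              (Viter Emax Dmax p q β ps t
                  (nextState Emax Dmax (⟨e, he⟩, X, ⟨d2, hd2⟩) false b f h) -
                Viter Emax Dmax p q β ps t
                  (nextState Emax Dmax (⟨e, he⟩, X, ⟨d1, hd1⟩) false b f h)) :=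
            mul_le_mul_of_nonneg_left hterm hw
        _ = bern β b * bern (if X then q else p) f * bern ps h *
              Viter Emax Dmax p q β ps t
                (nextState Emax Dmax (⟨e, he⟩, X, ⟨d2, hd2⟩) false b f h) -
            bern β b * bern (if X then q else p) f * bern ps h *
              Viter Emax Dmax p q β ps t
                (nextState Emax Dmax (⟨e, he⟩, X, ⟨d1, hd1⟩) false b f h) := by
            ring
    -- transmit kernel difference identity (battery ≥ 1)
    have F1 : ∀ e, 1 ≤ e → ∀ (X : Bool) (d1 d2 : ℕ)
        (he' : e - 1 < Emax + 1) (he : e < Emax + 1)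
        (hd1 : d1 < Dmax + 1) (hd2 : d2 < Dmax + 1),
        KV Emax Dmax p q β ps true (Viter Emax Dmax p q β ps t) (⟨e, he⟩, X, ⟨d2, hd2⟩) -
          KV Emax Dmax p q β ps true (Viter Emax Dmax p q β ps t) (⟨e, he⟩, X, ⟨d1, hd1⟩) =
        (1 - ps) *
          (KV Emax Dmax p q β ps false (Viter Emax Dmax p q β ps t) (⟨e - 1, he'⟩, X, ⟨d2, hd2⟩) -
            KV Emax Dmax p q β ps false (Viter Emax Dmax p q β ps t) (⟨e - 1, he'⟩, X, ⟨d1, hd1⟩)) := by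
      intro e he1 X d1 d2 he' he hd1 hd2
      have h0e : 0 < e := he1
      rw [KV_apply, KV_apply, KV_apply, KV_apply]
      simp only [nextState]
      simp only [Fintype.sum_bool, h0e, decide_true, decide_true,
        Bool.and_true, Bool.true_and, Bool.false_and, Bool.and_false,
        if_true, if_false, Bool.false_eq_true, bern,
        Nat.add_zero, Nat.sub_zero, Nat.add_sub_cancel, Nat.sub_add_cancel he1]
      ring
    -- with empty battery the two actions coincide
    have F1' : ∀ v (hv : v < Emax + 1), v = 0 → ∀ (X : Bool) (d : ℕ) (hd : d < Dmax + 1),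
        KV Emax Dmax p q β ps true (Viter Emax Dmax p q β ps t) (⟨v, hv⟩, X, ⟨d, hd⟩) =
        KV Emax Dmax p q β ps false (Viter Emax Dmax p q β ps t) (⟨v, hv⟩, X, ⟨d, hd⟩) := by
      rintro v hv rfl X d hd
      rw [KV_apply, KV_apply]
      simp [nextState]
    -- min/max helper facts
    have min_sub_le_max : ∀ a b a' b' : ℝ, min a b - min a' b' ≤ max (a - a') (b - b') := by
      intro a b a' b'
      rcases le_total a' b' with hab | hab
      · rw [min_eq_left hab]
        exact le_trans (by linarith [min_le_left a b]) (le_max_left _ _)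
      · rw [min_eq_right hab]
        exact le_trans (by linarith [min_le_right a b]) (le_max_right _ _)
    have le_min_sub : ∀ a b a' b' : ℝ, min (a - a') (b - b') ≤ min a b - min a' b' := by
      intro a b a' b'
      rcases le_total a b with hab | hab
      · rw [min_eq_left hab]
        exact le_trans (min_le_left _ _) (by linarith [min_le_left a' b'])
      · rw [min_eq_right hab]
        exact le_trans (min_le_right _ _) (by linarith [min_le_right a' b'])
    -- assembly
    intro e he1 X d1 d2 hd1p h12 he' he hd1 hd2
    simp only [Viter, cost]
    have h1 := F0 e he1 X d1 d2 hd1p h12 he' he hd1 hd2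
    have h2 := F1 e he1 X d1 d2 he' he hd1 hd2
    have h3 : (1 - ps) *
        (KV Emax Dmax p q β ps true (Viter Emax Dmax p q β ps t) (⟨e - 1, he'⟩, X, ⟨d2, hd2⟩) -
          KV Emax Dmax p q β ps true (Viter Emax Dmax p q β ps t) (⟨e - 1, he'⟩, X, ⟨d1, hd1⟩)) ≤
        (1 - ps) *
        (KV Emax Dmax p q β ps false (Viter Emax Dmax p q β ps t) (⟨e - 1, he'⟩, X, ⟨d2, hd2⟩) -
          KV Emax Dmax p q β ps false (Viter Emax Dmax p q β ps t) (⟨e - 1, he'⟩, X, ⟨d1, hd1⟩)) := by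
      rcases Nat.lt_or_ge e 2 with he2 | he2
      · rw [F1' (e - 1) he' (by omega) X d2 hd2, F1' (e - 1) he' (by omega) X d1 hd1]
      · have hE := F1 (e - 1) (by omega) X d1 d2 (by omega) he' hd1 hd2
        have hF := F0 (e - 1) (by omega) X d1 d2 hd1p h12 (by omega) he' hd1 hd2
        rw [hE]
        exact mul_le_mul_of_nonneg_left hF pfnn
    have hKey : (1 - ps) *
        (min (KV Emax Dmax p q β ps false (Viter Emax Dmax p q β ps t) (⟨e - 1, he'⟩, X, ⟨d2, hd2⟩))
             (KV Emax Dmax p q β ps true (Viter Emax Dmax p q β ps t) (⟨e - 1, he'⟩, X, ⟨d2, hd2⟩)) -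
         min (KV Emax Dmax p q β ps false (Viter Emax Dmax p q β ps t) (⟨e - 1, he'⟩, X, ⟨d1, hd1⟩))
             (KV Emax Dmax p q β ps true (Viter Emax Dmax p q β ps t) (⟨e - 1, he'⟩, X, ⟨d1, hd1⟩))) ≤
        min (KV Emax Dmax p q β ps false (Viter Emax Dmax p q β ps t) (⟨e, he⟩, X, ⟨d2, hd2⟩))
            (KV Emax Dmax p q β ps true (Viter Emax Dmax p q β ps t) (⟨e, he⟩, X, ⟨d2, hd2⟩)) -
        min (KV Emax Dmax p q β ps false (Viter Emax Dmax p q β ps t) (⟨e, he⟩, X, ⟨d1, hd1⟩))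
            (KV Emax Dmax p q β ps true (Viter Emax Dmax p q β ps t) (⟨e, he⟩, X, ⟨d1, hd1⟩)) := by
      refine le_trans (mul_le_mul_of_nonneg_left (min_sub_le_max _ _ _ _) pfnn)
        (le_trans ?_ (le_min_sub _ _ _ _))
      rw [mul_max_of_nonneg _ _ pfnn]
      refine max_le (le_min h1 ?_) (le_min (h3.trans h1) (h3.trans ?_))
      · rw [h2]
      · rw [h2]
    have hcost : (1 - ps) * ((d2 : ℝ) - (d1 : ℝ)) ≤ (d2 : ℝ) - (d1 : ℝ) := by
      have hc : (d1 : ℝ) ≤ (d2 : ℝ) := by exact_mod_cast h12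
      nlinarith
    nlinarith [hKey, hcost]

end Aux

/-- **Key induction inequality (eq. (13) in the proof of Theorem 1).**
For every value-iteration step `t`, battery level `1 ≤ e ≤ E_max`,
source state `X`, and VIA values `1 ≤ Δ⁻ ≤ Δ⁺ ≤ Δ_max`:
`p_f [V_t(e−1,X,Δ⁺) − V_t(e−1,X,Δ⁻)] ≤ V_t(e,X,Δ⁺) − V_t(e,X,Δ⁻)`,
where `p_f = 1 − p_s`. -/
theorem value_iteration_key_inequality (Emax Dmax : ℕ)
    (p q β ps : ℝ) (hp0 : 0 ≤ p) (hp1 : p ≤ 1) (hq0 : 0 ≤ q) (hq1 : q ≤ 1)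
    (hβ0 : 0 ≤ β) (hβ1 : β ≤ 1) (hps0 : 0 ≤ ps) (hps1 : ps ≤ 1)
    (t : ℕ) (e : ℕ) (he1 : 1 ≤ e) (he2 : e ≤ Emax) (X : Bool)
    (dm dp : ℕ) (hdm : 1 ≤ dm) (hdmdp : dm ≤ dp) (hdp : dp ≤ Dmax) :
    (1 - ps) *
        (Viter Emax Dmax p q β ps t (⟨e - 1, by omega⟩, X, ⟨dp, by omega⟩) -
          Viter Emax Dmax p q β ps t (⟨e - 1, by omega⟩, X, ⟨dm, by omega⟩)) ≤
      Viter Emax Dmax p q β ps t (⟨e, by omega⟩, X, ⟨dp, by omega⟩) -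
        Viter Emax Dmax p q β ps t (⟨e, by omega⟩, X, ⟨dm, by omega⟩) := by
  exact key_aux hp0 hp1 hq0 hq1 hβ0 hβ1 hps0 hps1 t e he1 X dm dp hdm hdmdp
    (by omega) (by omega) (by omega) (by omega)

end VIA
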